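/- For every integer n ≥ 3, the local dimension of the Kelly poset K_n equals 3. -/

import Mathlib

/-- A partial linear extension (ple) of a poset `α`: a set `dom` together with a
linear order `rel` on `dom` extending the restriction of the partial order to `dom`. -/
structure PLE (α : Type*) [PartialOrder α] where
  dom : Set α
  rel : α → α → Prop
  refl : ∀ x ∈ dom, rel x x
  antisymm : ∀ x ∈ dom, ∀ y ∈ dom, rel x y → rel y x → x = y
  trans : ∀ x ∈ dom, ∀ y ∈ dom, ∀ z ∈ dom, rel x y → rel y z → rel x z
  total : ∀ x ∈ dom, ∀ y ∈ dom, rel x y ∨ rel y x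
  extends_le : ∀ x ∈ dom, ∀ y ∈ dom, x ≤ y → rel x y

/-- `μ(u, 𝓛)`: the number of members of the family `𝓛` whose domain contains `u`. -/
noncomputable def mu {α : Type*} [PartialOrder α] {m : ℕ} (L : Fin m → PLE α) (u : α) : ℕ :=
  Set.ncard {i : Fin m | u ∈ (L i).dom}

/-- A family of ple's is a local realizer when every strict comparability is witnessed
and every incomparable pair is reversed by some member. -/
def IsLocalRealizer {α : Type*} [PartialOrder α] {m : ℕ} (L : Fin m → PLE α) : Prop :=
  (∀ x y : α, x < y → ∃ i, x ∈ (L i).dom ∧ y ∈ (L i).dom ∧ (L i).rel x y) ∧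
  (∀ x y : α, ¬ x ≤ y → ¬ y ≤ x → ∃ i, x ∈ (L i).dom ∧ y ∈ (L i).dom ∧ (L i).rel y x)

/-- The local dimension: the least positive `d` admitting a local realizer `𝓛`
with `μ(u,𝓛) ≤ d` for every `u`. -/
noncomputable def localDim (α : Type*) [PartialOrder α] : ℕ :=
  sInf {d : ℕ | 0 < d ∧ ∃ m : ℕ, ∃ L : Fin m → PLE α,
    IsLocalRealizer L ∧ ∀ u : α, mu L u ≤ d}


/-- The elements of the Kelly poset `K n`:
`a 1, …, a n`, `b 1, …, b n`, `w 1, …, w (n-1)`, `z 1, …, z (n-1)`. -/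
inductive KElt (n : ℕ) : Type
  | a : Fin n → KElt n
  | b : Fin n → KElt n
  | w : Fin (n - 1) → KElt n
  | z : Fin (n - 1) → KElt n

namespace KElt

/-- Inclusion `Fin (n-1) → Fin n` keeping the value. -/
def lo {n : ℕ} (i : Fin (n - 1)) : Fin n := ⟨i.val, by have := i.isLt; omega⟩

/-- The map `Fin (n-1) → Fin n` sending `i` to `i + 1`. -/
def hi {n : ℕ} (i : Fin (n - 1)) : Fin n := ⟨i.val + 1, by have := i.isLt; omega⟩

/-- The defining relations (cover relations) of the Kelly poset, with indices written
0-based: `aᵢ < wᵢ`, `wᵢ < bᵢ₊₁`, `wᵢ < wᵢ₊₁`, `aᵢ₊₁ < zᵢ`, `zᵢ < bᵢ`, `zᵢ₊₁ < zᵢ`. -/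
inductive kcov {n : ℕ} : KElt n → KElt n → Prop
  | aw (i : Fin (n - 1)) : kcov (.a (lo i)) (.w i)
  | wb (i : Fin (n - 1)) : kcov (.w i) (.b (hi i))
  | ww (i j : Fin (n - 1)) : j.val = i.val + 1 → kcov (.w i) (.w j)
  | az (i : Fin (n - 1)) : kcov (.a (hi i)) (.z i)
  | zb (i : Fin (n - 1)) : kcov (.z i) (.b (lo i))
  | zz (i j : Fin (n - 1)) : j.val = i.val + 1 → kcov (.z j) (.z i)

/-- A measure that strictly increases along the defining relations. -/
def kmeas {n : ℕ} : KElt n → ℕ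
  | .a _ => 0
  | .w i => i.val + 1
  | .z i => n - i.val
  | .b _ => n + 1

theorem kcov_meas {n : ℕ} {x y : KElt n} (h : kcov x y) : kmeas x < kmeas y := by
  cases h with
  | aw i => simp [kmeas]
  | wb i => have := i.isLt; simp [kmeas]; omega
  | ww i j h => have := i.isLt; simp [kmeas]; omega
  | az i => have := i.isLt; simp [kmeas]; omega
  | zb i => have := i.isLt; simp [kmeas] <;> omega
  | zz i j h => have := i.isLt; have := j.isLt; simp [kmeas]; omega

theorem rtg_meas {n : ℕ} {x y : KElt n} (h : Relation.ReflTransGen kcov x y) :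
    kmeas x ≤ kmeas y := by
  induction h with
  | refl => exact le_rfl
  | tail _ hc ih => exact le_trans ih (le_of_lt (kcov_meas hc))

/-- The Kelly poset: reflexive–transitive closure of the defining relations. -/
instance (n : ℕ) : PartialOrder (KElt n) where
  le := Relation.ReflTransGen kcov
  le_refl _ := Relation.ReflTransGen.refl
  le_trans _ _ _ := Relation.ReflTransGen.trans
  le_antisymm := by
    intro x y hxy hyx
    rcases Relation.ReflTransGen.cases_head hxy with rfl | ⟨c, hc, hcy⟩
    · rfl
    · exfalso
      have h1 : kmeas x < kmeas c := kcov_meas hc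
      have h2 : kmeas c ≤ kmeas y := rtg_meas hcy
      have h3 : kmeas y ≤ kmeas x := rtg_meas hyx
      omega

end KElt

namespace KellyAux
open KElt

/-- Explicit characterization of the order on `KElt n`. -/
def LE' {n : ℕ} : KElt n → KElt n → Prop
  | .a i, .a j => i.val = j.val
  | .a i, .w j => i.val ≤ j.val
  | .a i, .z j => j.val < i.val
  | .a i, .b j => i.val ≠ j.val
  | .w i, .w j => i.val ≤ j.val
  | .w i, .b j => i.val < j.val
  | .z i, .z j => j.val ≤ i.val
  | .z i, .b j => j.val ≤ i.val
  | .b i, .b j => i.val = j.val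
  | _, _ => False

end KellyAux
namespace KellyAux
open KElt

theorem le_imp_LE' {n : ℕ} {x y : KElt n} (h : x ≤ y) : LE' x y := by
  induction h with
  | refl => cases x <;> simp [LE']
  | tail _ hc ih =>
    cases hc <;> cases x <;>
      simp_all [LE', lo, hi] <;> omega

end KellyAux
namespace KellyAux
open KElt

theorem w_le_w {n : ℕ} {i j : Fin (n-1)} (h : i.val ≤ j.val) :
    (KElt.w i : KElt n) ≤ KElt.w j := by
  obtain ⟨d, hd⟩ : ∃ d, j.val = i.val + d := ⟨j.val - i.val, by omega⟩
  clear h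
  induction d generalizing j with
  | zero => have : i = j := Fin.ext (by omega); subst this; exact le_refl _
  | succ d ih =>
    have hj := j.isLt
    have h1 : i.val + d < n - 1 := by omega
    exact Relation.ReflTransGen.tail (ih (j := ⟨i.val + d, h1⟩) rfl)
      (KElt.kcov.ww ⟨i.val + d, h1⟩ j (show j.val = i.val + d + 1 by omega))

theorem z_le_z {n : ℕ} {i j : Fin (n-1)} (h : j.val ≤ i.val) :
    (KElt.z i : KElt n) ≤ KElt.z j := by
  obtain ⟨d, hd⟩ : ∃ d, i.val = j.val + d := ⟨i.val - j.val, by omega⟩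
  clear h
  induction d generalizing j with
  | zero => have : i = j := Fin.ext (by omega); subst this; exact le_refl _
  | succ d ih =>
    have hi := i.isLt
    have h1 : j.val + 1 < n - 1 := by omega
    exact Relation.ReflTransGen.tail (ih (j := ⟨j.val + 1, h1⟩) (show i.val = j.val + 1 + d by omega))
      (KElt.kcov.zz j ⟨j.val + 1, h1⟩ rfl)

theorem a_le_w {n : ℕ} {i : Fin n} {j : Fin (n-1)} (h : i.val ≤ j.val) :
    (KElt.a i : KElt n) ≤ KElt.w j := by
  have hi' : i.val < n - 1 := lt_of_le_of_lt h j.isLt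
  have hx : (KElt.a i : KElt n) = KElt.a (lo ⟨i.val, hi'⟩) := by
    rfl
  rw [hx]
  exact Relation.ReflTransGen.head (KElt.kcov.aw ⟨i.val, hi'⟩) (w_le_w h)

theorem a_le_z {n : ℕ} {i : Fin n} {j : Fin (n-1)} (h : j.val < i.val) :
    (KElt.a i : KElt n) ≤ KElt.z j := by
  have h1 : i.val - 1 < n - 1 := by have := i.isLt; omega
  have hx : (KElt.a i : KElt n) = KElt.a (hi ⟨i.val - 1, h1⟩) := by
    congr 1; exact Fin.ext (show i.val = i.val - 1 + 1 by omega)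
  rw [hx]
  exact Relation.ReflTransGen.head (KElt.kcov.az ⟨i.val - 1, h1⟩)
    (z_le_z (show j.val ≤ i.val - 1 by omega))

theorem w_le_b {n : ℕ} {i : Fin (n-1)} {j : Fin n} (h : i.val < j.val) :
    (KElt.w i : KElt n) ≤ KElt.b j := by
  have h1 : j.val - 1 < n - 1 := by have := j.isLt; omega
  have hx : (KElt.b j : KElt n) = KElt.b (hi ⟨j.val - 1, h1⟩) := by
    congr 1; exact Fin.ext (show j.val = j.val - 1 + 1 by omega)
  rw [hx]
  exact Relation.ReflTransGen.tail
    (w_le_w (i := i) (j := ⟨j.val - 1, h1⟩) (show i.val ≤ j.val - 1 by omega))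
    (KElt.kcov.wb ⟨j.val - 1, h1⟩)

theorem z_le_b {n : ℕ} {i : Fin (n-1)} {j : Fin n} (h : j.val ≤ i.val) :
    (KElt.z i : KElt n) ≤ KElt.b j := by
  have h1 : j.val < n - 1 := by have := i.isLt; omega
  have hx : (KElt.b j : KElt n) = KElt.b (lo ⟨j.val, h1⟩) := by
    rfl
  rw [hx]
  exact Relation.ReflTransGen.tail (z_le_z (i := i) (j := ⟨j.val, h1⟩) h)
    (KElt.kcov.zb ⟨j.val, h1⟩)

theorem a_le_b {n : ℕ} {i j : Fin n} (h : i.val ≠ j.val) :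
    (KElt.a i : KElt n) ≤ KElt.b j := by
  rcases lt_or_gt_of_ne h with hlt | hgt
  · have h1 : j.val - 1 < n - 1 := by have := j.isLt; omega
    exact le_trans (a_le_w (i := i) (j := ⟨j.val - 1, h1⟩) (show i.val ≤ j.val - 1 by omega))
      (w_le_b (show j.val - 1 < j.val by omega))
  · have h1 : j.val < n - 1 := by have := i.isLt; omega
    exact le_trans (a_le_z (i := i) (j := ⟨j.val, h1⟩) hgt)
      (z_le_b (le_refl _))

theorem LE'_imp_le {n : ℕ} {x y : KElt n} (h : LE' x y) : x ≤ y := by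
  cases x <;> cases y <;> simp only [LE'] at h
  case a.a i j => exact le_of_eq (by congr 1; exact Fin.ext h)
  case a.w i j => exact a_le_w h
  case a.z i j => exact a_le_z h
  case a.b i j => exact a_le_b h
  case w.w i j => exact w_le_w h
  case w.b i j => exact w_le_b h
  case z.z i j => exact z_le_z h
  case z.b i j => exact z_le_b h
  case b.b i j => exact le_of_eq (by congr 1; exact Fin.ext h)

end KellyAux
namespace KellyAux
open KElt

/-- Position of elements in the first global linear extension
`a₀ w₀ a₁ w₁ … w_{n-2} a_{n-1} b_{n-1} z_{n-2} b_{n-2} … z₀ b₀`. -/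
def rank1 {n : ℕ} : KElt n → ℕ
  | .a i => 2 * i.val
  | .w i => 2 * i.val + 1
  | .b i => 4 * n - 3 - 2 * i.val
  | .z i => 4 * n - 4 - 2 * i.val

/-- Position of elements in the second global linear extension
`a_{n-1} z_{n-2} a_{n-2} … z₀ a₀ b₀ w₀ b₁ w₁ … w_{n-2} b_{n-1}`. -/
def rank2 {n : ℕ} : KElt n → ℕ
  | .a i => 2 * n - 2 - 2 * i.val
  | .z i => 2 * n - 3 - 2 * i.val
  | .b i => 2 * n - 1 + 2 * i.val
  | .w i => 2 * n + 2 * i.val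

theorem rank1_inj {n : ℕ} (hn : 3 ≤ n) {x y : KElt n} (h : rank1 x = rank1 y) : x = y := by
  cases x with
  | a i => cases y with
    | a j => exact congrArg _ (Fin.ext (by simp only [rank1] at h; omega))
    | b j => exfalso; have := i.isLt; have := j.isLt; simp only [rank1] at h; omega
    | w j => exfalso; have := i.isLt; have := j.isLt; simp only [rank1] at h; omega
    | z j => exfalso; have := i.isLt; have := j.isLt; simp only [rank1] at h; omega
  | b i => cases y with
    | a j => exfalso; have := i.isLt; have := j.isLt; simp only [rank1] at h; omega
    | b j => exact congrArg _ (Fin.ext (by have := i.isLt; have := j.isLt; simp only [rank1] at h; omega))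
    | w j => exfalso; have := i.isLt; have := j.isLt; simp only [rank1] at h; omega
    | z j => exfalso; have := i.isLt; have := j.isLt; simp only [rank1] at h; omega
  | w i => cases y with
    | a j => exfalso; have := i.isLt; have := j.isLt; simp only [rank1] at h; omega
    | b j => exfalso; have := i.isLt; have := j.isLt; simp only [rank1] at h; omega
    | w j => exact congrArg _ (Fin.ext (by simp only [rank1] at h; omega))
    | z j => exfalso; have := i.isLt; have := j.isLt; simp only [rank1] at h; omega
  | z i => cases y with
    | a j => exfalso; have := i.isLt; have := j.isLt; simp only [rank1] at h; omega
    | b j => exfalso; have := i.isLt; have := j.isLt; simp only [rank1] at h; omega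
    | w j => exfalso; have := i.isLt; have := j.isLt; simp only [rank1] at h; omega
    | z j => exact congrArg _ (Fin.ext (by have := i.isLt; have := j.isLt; simp only [rank1] at h; omega))

theorem rank2_inj {n : ℕ} (hn : 3 ≤ n) {x y : KElt n} (h : rank2 x = rank2 y) : x = y := by
  cases x with
  | a i => cases y with
    | a j => exact congrArg _ (Fin.ext (by have := i.isLt; have := j.isLt; simp only [rank2] at h; omega))
    | b j => exfalso; have := i.isLt; have := j.isLt; simp only [rank2] at h; omega
    | w j => exfalso; have := i.isLt; have := j.isLt; simp only [rank2] at h; omega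
    | z j => exfalso; have := i.isLt; have := j.isLt; simp only [rank2] at h; omega
  | b i => cases y with
    | a j => exfalso; have := i.isLt; have := j.isLt; simp only [rank2] at h; omega
    | b j => exact congrArg _ (Fin.ext (by simp only [rank2] at h; omega))
    | w j => exfalso; have := i.isLt; have := j.isLt; simp only [rank2] at h; omega
    | z j => exfalso; have := i.isLt; have := j.isLt; simp only [rank2] at h; omega
  | w i => cases y with
    | a j => exfalso; have := i.isLt; have := j.isLt; simp only [rank2] at h; omega
    | b j => exfalso; have := i.isLt; have := j.isLt; simp only [rank2] at h; omega
    | w j => exact congrArg _ (Fin.ext (by simp only [rank2] at h; omega))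
    | z j => exfalso; have := i.isLt; have := j.isLt; simp only [rank2] at h; omega
  | z i => cases y with
    | a j => exfalso; have := i.isLt; have := j.isLt; simp only [rank2] at h; omega
    | b j => exfalso; have := i.isLt; have := j.isLt; simp only [rank2] at h; omega
    | w j => exfalso; have := i.isLt; have := j.isLt; simp only [rank2] at h; omega
    | z j => exact congrArg _ (Fin.ext (by have := i.isLt; have := j.isLt; simp only [rank2] at h; omega))

theorem rank1_mono {n : ℕ} (hn : 3 ≤ n) {x y : KElt n} (h : LE' x y) :
    rank1 x ≤ rank1 y := by
  cases x <;> cases y <;> simp only [LE'] at h <;>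
    simp only [rank1] <;>
    (try rename_i i j) <;>
    (try exact h.elim) <;>
    (first
      | omega
      | (have := i.isLt; have := j.isLt; omega))

theorem rank2_mono {n : ℕ} (hn : 3 ≤ n) {x y : KElt n} (h : LE' x y) :
    rank2 x ≤ rank2 y := by
  cases x <;> cases y <;> simp only [LE'] at h <;>
    simp only [rank2] <;>
    (try rename_i i j) <;>
    (try exact h.elim) <;>
    (first
      | omega
      | (have := i.isLt; have := j.isLt; omega))

end KellyAux
namespace KellyAux
open KElt

theorem le_iff_LE' {n : ℕ} {x y : KElt n} : x ≤ y ↔ LE' x y :=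
  ⟨le_imp_LE', LE'_imp_le⟩

/-- The first global linear extension, as a ple with full domain. -/
def C1 {n : ℕ} (hn : 3 ≤ n) : PLE (KElt n) where
  dom := Set.univ
  rel x y := rank1 x ≤ rank1 y
  refl _ _ := le_rfl
  antisymm _ _ _ _ h1 h2 := rank1_inj hn (le_antisymm h1 h2)
  trans _ _ _ _ _ _ h1 h2 := le_trans h1 h2
  total _ _ _ _ := le_total _ _
  extends_le x _ y _ h := rank1_mono hn (le_imp_LE' h)

/-- The second global linear extension, as a ple with full domain. -/
def C2 {n : ℕ} (hn : 3 ≤ n) : PLE (KElt n) where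
  dom := Set.univ
  rel x y := rank2 x ≤ rank2 y
  refl _ _ := le_rfl
  antisymm _ _ _ _ h1 h2 := rank2_inj hn (le_antisymm h1 h2)
  trans _ _ _ _ _ _ h1 h2 := le_trans h1 h2
  total _ _ _ _ := le_total _ _
  extends_le x _ y _ h := rank2_mono hn (le_imp_LE' h)

/-- The two-element ple `b i < a i`. -/
def Pp {n : ℕ} (i : Fin n) : PLE (KElt n) where
  dom := {KElt.a i, KElt.b i}
  rel x y := x = y ∨ (x = KElt.b i ∧ y = KElt.a i)
  refl _ _ := Or.inl rfl
  antisymm x _ y _ h1 h2 := by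
    rcases h1 with rfl | ⟨rfl, rfl⟩
    · rfl
    · rcases h2 with h | ⟨h, h'⟩ <;> exact absurd h (by simp)
  trans x _ y _ z _ h1 h2 := by
    rcases h1 with rfl | ⟨rfl, rfl⟩
    · exact h2
    · rcases h2 with rfl | ⟨h, h'⟩
      · exact Or.inr ⟨rfl, rfl⟩
      · exact absurd h (by simp)
  total x hx y hy := by
    rcases hx with rfl | rfl <;> rcases hy with rfl | rfl
    · exact Or.inl (Or.inl rfl)
    · exact Or.inr (Or.inr ⟨rfl, rfl⟩)
    · exact Or.inl (Or.inr ⟨rfl, rfl⟩)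
    · exact Or.inl (Or.inl rfl)
  extends_le x hx y hy h := by
    rcases hx with rfl | rfl <;> rcases hy with rfl | rfl
    · exact Or.inl rfl
    · exact absurd (le_imp_LE' h) (by simp [LE'])
    · exact absurd (le_imp_LE' h) (by simp [LE'])
    · exact Or.inl rfl

/-- The local realizer family: the two linear extensions followed by the
pair reversals `bᵢ < aᵢ`. -/
def fam {n : ℕ} (hn : 3 ≤ n) (i : Fin (n + 2)) : PLE (KElt n) :=
  if i.val = 0 then C1 hn
  else if i.val = 1 then C2 hn
  else Pp ⟨i.val - 2, by have := i.isLt; omega⟩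

theorem fam_zero {n : ℕ} (hn : 3 ≤ n) : fam hn 0 = C1 hn := rfl

theorem fam_one {n : ℕ} (hn : 3 ≤ n) : fam hn 1 = C2 hn := rfl

theorem fam_pp {n : ℕ} (hn : 3 ≤ n) (i : Fin n) :
    fam hn ⟨i.val + 2, by have := i.isLt; omega⟩ = Pp i := rfl

end KellyAux
namespace KellyAux
open KElt

theorem wit0 {n : ℕ} {hn : 3 ≤ n} {x y : KElt n} (h : rank1 y ≤ rank1 x) :
    ∃ i, x ∈ (fam hn i).dom ∧ y ∈ (fam hn i).dom ∧ (fam hn i).rel y x :=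
  ⟨0, Set.mem_univ _, Set.mem_univ _, h⟩

theorem wit1 {n : ℕ} {hn : 3 ≤ n} {x y : KElt n} (h : rank2 y ≤ rank2 x) :
    ∃ i, x ∈ (fam hn i).dom ∧ y ∈ (fam hn i).dom ∧ (fam hn i).rel y x :=
  ⟨1, Set.mem_univ _, Set.mem_univ _, h⟩

theorem witP {n : ℕ} {hn : 3 ≤ n} {i j : Fin n} (h : i.val = j.val) :
    ∃ t, (KElt.a i : KElt n) ∈ (fam hn t).dom ∧ (KElt.b j : KElt n) ∈ (fam hn t).dom ∧
      (fam hn t).rel (KElt.b j) (KElt.a i) := by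
  have hj : (KElt.b j : KElt n) = KElt.b i := congrArg _ (Fin.ext h.symm)
  exact ⟨⟨i.val + 2, by have := i.isLt; omega⟩, Or.inl rfl, Or.inr hj,
    Or.inr ⟨hj, rfl⟩⟩

theorem fam_realizer {n : ℕ} (hn : 3 ≤ n) : IsLocalRealizer (fam (n := n) hn) := by
  constructor
  · intro x y hxy
    exact ⟨0, Set.mem_univ _, Set.mem_univ _,
      (C1 hn).extends_le x (Set.mem_univ _) y (Set.mem_univ _) (le_of_lt hxy)⟩
  · intro x y hxy hyx
    have h1 : ¬ LE' x y := fun h => hxy (LE'_imp_le h)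
    have h2 : ¬ LE' y x := fun h => hyx (LE'_imp_le h)
    cases x with
    | a i =>
      cases y with
      | a j =>
        simp only [LE'] at h1 h2
        rcases Nat.lt_or_ge j.val i.val with hc | hc
        · exact wit0 (by simp only [rank1]; omega)
        · exact wit1 (by simp only [rank2]; omega)
      | b j => simp only [LE', not_not] at h1 h2; exact witP h1
      | w j =>
        simp only [LE', not_le] at h1 h2
        exact wit0 (by simp only [rank1]; omega)
      | z j =>
        simp only [LE', not_lt] at h1 h2
        exact wit1 (by simp only [rank2]; have := i.isLt; have := j.isLt; omega)
    | b i =>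
      cases y with
      | a j =>
        simp only [LE', not_not] at h1 h2
        exact wit0 (by simp only [rank1]; have := i.isLt; have := j.isLt; omega)
      | b j =>
        simp only [LE'] at h1 h2
        rcases Nat.lt_or_ge i.val j.val with hc | hc
        · exact wit0 (by simp only [rank1]; have := i.isLt; have := j.isLt; omega)
        · exact wit1 (by simp only [rank2]; omega)
      | w j =>
        simp only [LE', not_lt] at h1 h2
        exact wit0 (by simp only [rank1]; have := i.isLt; have := j.isLt; omega)
      | z j =>
        simp only [LE', not_le] at h1 h2
        exact wit1 (by simp only [rank2]; have := i.isLt; have := j.isLt; omega)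
    | w i =>
      cases y with
      | a j =>
        simp only [LE', not_le] at h1 h2
        exact wit1 (by simp only [rank2]; have := i.isLt; have := j.isLt; omega)
      | b j =>
        simp only [LE', not_lt] at h1 h2
        exact wit1 (by simp only [rank2]; omega)
      | w j => simp only [LE', not_le] at h1 h2; omega
      | z j =>
        exact wit1 (by simp only [rank2]; have := i.isLt; have := j.isLt; omega)
    | z i =>
      cases y with
      | a j =>
        simp only [LE', not_lt] at h1 h2
        exact wit0 (by simp only [rank1]; have := i.isLt; have := j.isLt; omega)
      | b j =>
        simp only [LE', not_le] at h1 h2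
        exact wit0 (by simp only [rank1]; have := i.isLt; have := j.isLt; omega)
      | w j =>
        exact wit0 (by simp only [rank1]; have := i.isLt; have := j.isLt; omega)
      | z j => simp only [LE', not_le] at h1 h2; omega

end KellyAux
namespace KellyAux
open KElt

theorem ncard_le_three {m : ℕ} {S : Set (Fin m)} (x y z : Fin m)
    (h : ∀ t ∈ S, t = x ∨ t = y ∨ t = z) : S.ncard ≤ 3 := by
  have hsub : S ⊆ {x, y, z} := by
    intro t ht; rcases h t ht with rfl | rfl | rfl <;> simp
  refine le_trans (Set.ncard_le_ncard hsub (Set.toFinite _)) ?_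
  refine le_trans (Set.ncard_insert_le x _) ?_
  have := Set.ncard_insert_le y ({z} : Set (Fin m))
  simp only [Set.ncard_singleton] at this ⊢
  omega

theorem mu_fam_le {n : ℕ} (hn : 3 ≤ n) (u : KElt n) : mu (fam hn) u ≤ 3 := by
  have key : ∀ (t : Fin (n + 2)),
      (∀ i : Fin (n + 2), u ∈ (fam hn i).dom → 2 ≤ i.val → i = t) →
      mu (fam hn) u ≤ 3 := by
    intro t ht
    refine ncard_le_three 0 1 t ?_
    intro i hi
    rcases Nat.lt_or_ge i.val 2 with hc | hc
    · interval_cases h : i.val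
      · exact Or.inl (Fin.ext (by simpa using h))
      · exact Or.inr (Or.inl (Fin.ext (by simpa using h)))
    · exact Or.inr (Or.inr (ht i hi hc))
  have domPp : ∀ i : Fin (n + 2), 2 ≤ i.val →
      (fam hn i).dom = {KElt.a ⟨i.val - 2, by have := i.isLt; omega⟩,
        KElt.b ⟨i.val - 2, by have := i.isLt; omega⟩} := by
    intro i hc
    simp only [fam]
    rw [if_neg (by omega), if_neg (by omega)]
    rfl
  cases u with
  | a k =>
    refine key ⟨k.val + 2, by have := k.isLt; omega⟩ ?_
    intro i hi hc
    rw [domPp i hc] at hi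
    rcases hi with h | h
    · injection h with h'
      have hv := congrArg Fin.val h'
      simp only [] at hv
      exact Fin.ext (show i.val = k.val + 2 by omega)
    · exact absurd h (by simp)
  | b k =>
    refine key ⟨k.val + 2, by have := k.isLt; omega⟩ ?_
    intro i hi hc
    rw [domPp i hc] at hi
    rcases hi with h | h
    · exact absurd h (by simp)
    · injection h with h'
      have hv := congrArg Fin.val h'
      simp only [] at hv
      exact Fin.ext (show i.val = k.val + 2 by omega)
  | w k =>
    refine key 0 ?_
    intro i hi hc
    rw [domPp i hc] at hi
    rcases hi with h | h <;> exact absurd h (by simp)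
  | z k =>
    refine key 0 ?_
    intro i hi hc
    rw [domPp i hc] at hi
    rcases hi with h | h <;> exact absurd h (by simp)

end KellyAux
namespace KellyAux
open KElt

theorem three_le_ncard {m : ℕ} {S : Set (Fin m)} {x y z : Fin m}
    (hx : x ∈ S) (hy : y ∈ S) (hz : z ∈ S)
    (hxy : x ≠ y) (hxz : x ≠ z) (hyz : y ≠ z) : 3 ≤ S.ncard := by
  have hsub : ({x, y, z} : Set (Fin m)) ⊆ S := by
    intro t ht
    rcases ht with rfl | rfl | rfl
    · exact hx
    · exact hy
    · exact hz
  have h3 : ({x, y, z} : Set (Fin m)).ncard = 3 := by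
    rw [Set.ncard_insert_of_notMem (by simp [hxy, hxz]),
      Set.ncard_insert_of_notMem (by simp [hyz]), Set.ncard_singleton]
  calc (3 : ℕ) = ({x, y, z} : Set (Fin m)).ncard := h3.symm
    _ ≤ S.ncard := Set.ncard_le_ncard hsub (Set.toFinite _)

theorem two_of_three {m : ℕ} {S : Set (Fin m)} (hS : S.ncard ≤ 2) {x y z : Fin m}
    (hx : x ∈ S) (hy : y ∈ S) (hz : z ∈ S) : x = y ∨ x = z ∨ y = z := by
  by_contra hcon
  push_neg at hcon
  have := three_le_ncard hx hy hz hcon.1 hcon.2.1 hcon.2.2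
  omega

/-- Two different index pairs cannot both be reversed in the same ple. -/
theorem rev_ne {n m : ℕ} {L : Fin m → PLE (KElt n)} {i j : Fin n} (hij : i.val ≠ j.val)
    {t : Fin m}
    (hai : KElt.a i ∈ (L t).dom) (hbi : KElt.b i ∈ (L t).dom)
    (hri : (L t).rel (KElt.b i) (KElt.a i))
    (haj : KElt.a j ∈ (L t).dom) (hbj : KElt.b j ∈ (L t).dom)
    (hrj : (L t).rel (KElt.b j) (KElt.a j)) : False := by
  have h1 : (L t).rel (KElt.a i) (KElt.b j) :=
    (L t).extends_le _ hai _ hbj (LE'_imp_le (by simpa [LE'] using hij))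
  have h2 : (L t).rel (KElt.a j) (KElt.b i) :=
    (L t).extends_le _ haj _ hbi (LE'_imp_le (by simp [LE']; omega))
  have hbb : (L t).rel (KElt.b i) (KElt.b j) :=
    (L t).trans _ hbi _ hai _ hbj hri h1
  have hbb' : (L t).rel (KElt.b j) (KElt.b i) :=
    (L t).trans _ hbj _ haj _ hbi hrj h2
  have heq := (L t).antisymm _ hbi _ hbj hbb hbb'
  injection heq with h'
  exact hij (congrArg Fin.val h')

theorem not_le_ab {n : ℕ} {i j : Fin n} (h : i.val = j.val) :
    ¬ (KElt.a i : KElt n) ≤ KElt.b j := fun hle => by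
  have := le_imp_LE' hle
  simp only [LE'] at this
  exact this h

theorem not_le_ba {n : ℕ} (i j : Fin n) : ¬ (KElt.b i : KElt n) ≤ KElt.a j := fun hle => by
  have := le_imp_LE' hle
  simp only [LE'] at this

theorem not_le_aa {n : ℕ} {i j : Fin n} (h : i.val ≠ j.val) :
    ¬ (KElt.a i : KElt n) ≤ KElt.a j := fun hle => by
  have := le_imp_LE' hle
  simp only [LE'] at this
  exact h this

/-- A pair `aᵢ, aⱼ` of distinct minimal elements is contained in two different
members of a local realizer. -/
theorem two_wits {n m : ℕ} {L : Fin m → PLE (KElt n)} (hr : IsLocalRealizer L)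
    {i j : Fin n} (hij : i.val ≠ j.val) :
    ∃ s s' : Fin m, s ≠ s' ∧ KElt.a i ∈ (L s).dom ∧ KElt.a j ∈ (L s).dom ∧
      KElt.a i ∈ (L s').dom ∧ KElt.a j ∈ (L s').dom := by
  obtain ⟨s, hs1, hs2, hs3⟩ := hr.2 _ _ (not_le_aa hij) (not_le_aa (Ne.symm hij))
  obtain ⟨s', hs1', hs2', hs3'⟩ := hr.2 _ _ (not_le_aa (Ne.symm hij)) (not_le_aa hij)
  refine ⟨s, s', ?_, hs1, hs2, hs2', hs1'⟩
  rintro rfl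
  have heq := (L s).antisymm _ hs1 _ hs2 hs3' hs3
  injection heq with h'
  exact hij (congrArg Fin.val h')

theorem lower_bound {n m : ℕ} (hn : 3 ≤ n) (L : Fin m → PLE (KElt n))
    (hr : IsLocalRealizer L) (hmu : ∀ u, mu L u ≤ 2) : False := by
  have h3 : (3:ℕ) ≤ n := hn
  -- the three relevant indices
  let i0 : Fin n := ⟨0, by omega⟩
  let i1 : Fin n := ⟨1, by omega⟩
  let i2 : Fin n := ⟨2, by omega⟩
  -- reversal witnesses for the pairs (aᵢ, bᵢ)
  obtain ⟨r0, hr0a, hr0b, hr0r⟩ := hr.2 (KElt.a i0) (KElt.b i0) (not_le_ab rfl) (not_le_ba _ _)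
  obtain ⟨r1, hr1a, hr1b, hr1r⟩ := hr.2 (KElt.a i1) (KElt.b i1) (not_le_ab rfl) (not_le_ba _ _)
  obtain ⟨r2, hr2a, hr2b, hr2r⟩ := hr.2 (KElt.a i2) (KElt.b i2) (not_le_ab rfl) (not_le_ba _ _)
  obtain ⟨s, s', hss, hsa0, hsa1, hs'a0, hs'a1⟩ :=
    two_wits hr (i := i0) (j := i1) (by simp [i0, i1])
  obtain ⟨p, p', hpp, hpa0, hpa2, hp'a0, hp'a2⟩ :=
    two_wits hr (i := i0) (j := i2) (by simp [i0, i2])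
  have hD : ∀ i : Fin n, {t : Fin m | KElt.a i ∈ (L t).dom}.ncard ≤ 2 :=
    fun i => hmu (KElt.a i)
  have hin0 : ∀ t : Fin m, KElt.a i0 ∈ (L t).dom → t = s ∨ t = s' := by
    intro t ht
    rcases two_of_three (hD i0) (x := t) (y := s) (z := s') ht hsa0 hs'a0 with h | h | h
    · exact Or.inl h
    · exact Or.inr h
    · exact absurd h hss
  have hin1 : ∀ t : Fin m, KElt.a i1 ∈ (L t).dom → t = s ∨ t = s' := by
    intro t ht
    rcases two_of_three (hD i1) (x := t) (y := s) (z := s') ht hsa1 hs'a1 with h | h | h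
    · exact Or.inl h
    · exact Or.inr h
    · exact absurd h hss
  have hin2 : ∀ t : Fin m, KElt.a i2 ∈ (L t).dom → t = p ∨ t = p' := by
    intro t ht
    rcases two_of_three (hD i2) (x := t) (y := p) (z := p') ht hpa2 hp'a2 with h | h | h
    · exact Or.inl h
    · exact Or.inr h
    · exact absurd h hpp
  have hp_mem : p = s ∨ p = s' := hin0 p hpa0
  have hp'_mem : p' = s ∨ p' = s' := hin0 p' hp'a0
  have h0 : r0 = s ∨ r0 = s' := hin0 r0 hr0a
  have h1 : r1 = s ∨ r1 = s' := hin1 r1 hr1a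
  have h2 : r2 = s ∨ r2 = s' := by
    rcases hin2 r2 hr2a with h | h
    · rw [h]; exact hp_mem
    · rw [h]; exact hp'_mem
  have hcoin : r0 = r1 ∨ r0 = r2 ∨ r1 = r2 := by
    rcases h0 with h0' | h0' <;> rcases h1 with h1' | h1' <;> rcases h2 with h2' | h2' <;>
      first
      | exact Or.inl (h0'.trans h1'.symm)
      | exact Or.inr (Or.inl (h0'.trans h2'.symm))
      | exact Or.inr (Or.inr (h1'.trans h2'.symm))
  rcases hcoin with he | he | he
  · rw [he] at hr0a hr0b hr0r
    exact rev_ne (i := i0) (j := i1) (by simp [i0, i1]) hr0a hr0b hr0r hr1a hr1b hr1r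
  · rw [he] at hr0a hr0b hr0r
    exact rev_ne (i := i0) (j := i2) (by simp [i0, i2]) hr0a hr0b hr0r hr2a hr2b hr2r
  · rw [he] at hr1a hr1b hr1r
    exact rev_ne (i := i1) (j := i2) (by simp [i1, i2]) hr1a hr1b hr1r hr2a hr2b hr2r

end KellyAux
/-- The local dimension of the Kelly poset `K_n` equals `3` for `n ≥ 3`. -/
theorem localDim_kelly_eq_three (n : ℕ) (hn : 3 ≤ n) :
    localDim (KElt n) = 3 := by
  have h3 : 3 ∈ {d : ℕ | 0 < d ∧ ∃ m : ℕ, ∃ L : Fin m → PLE (KElt n),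
      IsLocalRealizer L ∧ ∀ u : KElt n, mu L u ≤ d} :=
    ⟨by norm_num, n + 2, KellyAux.fam hn, KellyAux.fam_realizer hn, KellyAux.mu_fam_le hn⟩
  rw [localDim]
  refine le_antisymm (Nat.sInf_le h3) (le_csInf ⟨3, h3⟩ ?_)
  rintro d ⟨hd, m, L, hreal, hmu⟩
  by_contra hlt
  push_neg at hlt
  exact KellyAux.lower_bound hn L hreal (fun u => le_trans (hmu u) (by omega))
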